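/- Fix d = (d_0,…,d_n) ∈ (ℕ_{>0})^{n+1}. For i = 0,…,n let Δ_i = {x ∈ (ℝ_{≥0})^n : |x| ≤ d_i} and let φ_i : Δ_i → ℝ be the affine function φ_0(x) = |x| and φ_i(x) = d_i − x_i for i > 0. Let φ = φ_0 ⊞ ⋯ ⊞ φ_n be the inf-convolution on Δ = Σ_i Δ_i = {x ∈ (ℝ_{≥0})^n : |x| ≤ |d|}. Then for all x ∈ Δ, φ(x) = Σ_{i=0}^{n} max{0, ℓ_i(x)}, where ℓ_0(x) = Σ_{j=1}^n d_j − |x| and ℓ_i(x) = x_i − d_i for i > 0. -/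

import Mathlib

noncomputable section

/-- The scaled standard simplex `{x ∈ ℝⁿ_{≥0} : |x| ≤ c}`. -/
def simplexLe {n : ℕ} (c : ℝ) : Set (Fin n → ℝ) := {x | (∀ j, 0 ≤ x j) ∧ ∑ j, x j ≤ c}

/-- The affine functions `φ_0(x) = |x|`, `φ_i(x) = d_i − x_i` for `i > 0`. -/
def phiFn {n : ℕ} (d : Fin (n + 1) → ℕ) (i : Fin (n + 1)) (x : Fin n → ℝ) : ℝ :=
  if h : (i : ℕ) = 0 then ∑ j, x j
  else (d i : ℝ) - x ⟨(i : ℕ) - 1, by have := i.isLt; omega⟩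

/-- The affine functions `ℓ_0(x) = Σ_{j=1}^n d_j − |x|`, `ℓ_i(x) = x_i − d_i` for `i > 0`. -/
def ellFn {n : ℕ} (d : Fin (n + 1) → ℕ) (i : Fin (n + 1)) (x : Fin n → ℝ) : ℝ :=
  if h : (i : ℕ) = 0 then (∑ j : Fin n, (d j.succ : ℝ)) - ∑ j, x j
  else x ⟨(i : ℕ) - 1, by have := i.isLt; omega⟩ - (d i : ℝ)

/-- The inf-convolution of the functions `ψ i` with domains `Λ i`. -/
def infConv {n s : ℕ} (Λ : Fin s → Set (Fin n → ℝ)) (ψ : Fin s → (Fin n → ℝ) → ℝ)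
    (x : Fin n → ℝ) : ℝ :=
  sInf {t | ∃ y : Fin s → Fin n → ℝ,
    (∀ i, y i ∈ Λ i) ∧ (∑ i, y i) = x ∧ (∑ i, ψ i (y i)) = t}

/-- The inf-convolution `φ = φ_0 ⊞ ⋯ ⊞ φ_n` on `Δ = {x ∈ ℝⁿ_{≥0} : |x| ≤ |d|}` satisfies
`φ(x) = Σ_i max{0, ℓ_i(x)}` for all `x ∈ Δ`. -/
theorem stmt10 (n : ℕ) (d : Fin (n + 1) → ℕ) (hd : ∀ i, 0 < d i) :
    ∀ x ∈ simplexLe (n := n) (∑ i, (d i : ℝ)),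
      infConv (fun i => simplexLe ((d i : ℝ))) (phiFn d) x
        = ∑ i, max 0 (ellFn d i x) := by
  intro x hx
  obtain ⟨hx0, hxs⟩ := hx
  have hd0 : (0:ℝ) < d 0 := by exact_mod_cast hd 0
  -- abbreviations
  set a : Fin n → ℝ := fun j => min (d j.succ : ℝ) (x j) with ha_def
  set r : Fin n → ℝ := fun j => x j - a j with hr_def
  set cap : Fin n → ℝ := fun j => (d j.succ : ℝ) - a j with hcap_def
  set R : ℝ := ∑ j, r j with hR_def
  set C : ℝ := ∑ j, cap j with hC_def
  have ha_le_x : ∀ j, a j ≤ x j := fun j => min_le_right _ _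
  have ha_le_d : ∀ j, a j ≤ (d j.succ : ℝ) := fun j => min_le_left _ _
  have ha0 : ∀ j, 0 ≤ a j := fun j => le_min (by positivity) (hx0 j)
  have hr0 : ∀ j, 0 ≤ r j := fun j => sub_nonneg.2 (ha_le_x j)
  have hcap0 : ∀ j, 0 ≤ cap j := fun j => sub_nonneg.2 (ha_le_d j)
  have hR0 : 0 ≤ R := Finset.sum_nonneg fun j _ => hr0 j
  have hC0 : 0 ≤ C := Finset.sum_nonneg fun j _ => hcap0 j
  have hRC : R - C = (∑ j, x j) - ∑ j : Fin n, (d j.succ : ℝ) := by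
    rw [hR_def, hC_def, ← Finset.sum_sub_distrib, ← Finset.sum_sub_distrib]
    apply Finset.sum_congr rfl
    intro j _
    show (x j - a j) - ((d j.succ : ℝ) - a j) = x j - (d j.succ : ℝ)
    ring
  have hdsum : (∑ i, (d i : ℝ)) = (d 0 : ℝ) + ∑ j : Fin n, (d j.succ : ℝ) :=
    Fin.sum_univ_succ _
  have hRCd0 : R - C ≤ (d 0 : ℝ) := by
    rw [hRC]; rw [hdsum] at hxs; linarith
  -- the target equals max R C
  have hT : (∑ i, max 0 (ellFn d i x)) = max R C := by
    rw [Fin.sum_univ_succ]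
    have h0 : ellFn d 0 x = C - R := by
      have : ellFn d 0 x = (∑ j : Fin n, (d j.succ : ℝ)) - ∑ j, x j := by simp [ellFn]
      rw [this]; linarith [hRC]
    have h1 : ∀ k : Fin n, max 0 (ellFn d k.succ x) = r k := by
      intro k
      have he : ellFn d k.succ x = x k - (d k.succ : ℝ) := by simp [ellFn]
      rw [he]
      have hrk : r k = x k - min ((d k.succ : ℝ)) (x k) := rfl
      rw [hrk]
      rcases min_cases ((d k.succ : ℝ)) (x k) with ⟨h, h'⟩ | ⟨h, h'⟩ <;> rw [h]
      · exact max_eq_right (by linarith)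
      · rw [max_eq_left (by linarith)]
        ring
    rw [h0, Finset.sum_congr rfl (fun k _ => h1 k), ← hR_def]
    rcases le_total R C with h | h
    · rw [max_eq_right h]
      rw [max_eq_right (show (0:ℝ) ≤ C - R by linarith)]
      ring
    · rw [max_eq_left h]
      rw [max_eq_left (show C - R ≤ (0:ℝ) by linarith)]
      ring
  rw [hT]
  -- value of phi sums
  have phis : ∀ (k : Fin n) (z : Fin n → ℝ), phiFn d k.succ z = (d k.succ : ℝ) - z k := by
    intro k z; simp [phiFn]
  have phi0 : ∀ z : Fin n → ℝ, phiFn d 0 z = ∑ j, z j := by intro z; simp [phiFn]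
  -- lower bound : every element of the set is ≥ max R C
  have lower : ∀ t ∈ {t | ∃ y : Fin (n+1) → Fin n → ℝ,
      (∀ i, y i ∈ simplexLe ((d i : ℝ))) ∧ (∑ i, y i) = x ∧
      (∑ i, phiFn d i (y i)) = t}, max R C ≤ t := by
    rintro t ⟨y, hyΔ, hxy, rfl⟩
    have hy0 : ∀ i j, 0 ≤ y i j := fun i j => (hyΔ i).1 j
    have hys : ∀ i, (∑ j, y i j) ≤ (d i : ℝ) := fun i => (hyΔ i).2
    have hcoord : ∀ j, (∑ i, y i j) = x j := by
      intro j
      have := congrFun hxy j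
      simpa [Finset.sum_apply] using this
    have hyle : ∀ k : Fin n, y k.succ k ≤ a k := by
      intro k
      refine le_min ?_ ?_
      · exact le_trans (Finset.single_le_sum (fun j _ => hy0 k.succ j) (Finset.mem_univ k)) (hys k.succ)
      · rw [← hcoord k]
        exact Finset.single_le_sum (fun i _ => hy0 i k) (Finset.mem_univ k.succ)
    have hval : (∑ i, phiFn d i (y i)) =
        (∑ j, y 0 j) + ∑ k : Fin n, ((d k.succ : ℝ) - y k.succ k) := by
      rw [Fin.sum_univ_succ, phi0,
        Finset.sum_congr rfl (fun k (_ : k ∈ Finset.univ) => phis k (y k.succ))]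
    rw [hval]
    have hy00 : 0 ≤ ∑ j, y 0 j := Finset.sum_nonneg fun j _ => hy0 0 j
    apply max_le
    · -- R ≤ value
      have step1 : R ≤ ∑ k : Fin n, (x k - y k.succ k) := by
        apply Finset.sum_le_sum
        intro k _
        have := hyle k
        simp only [hr_def]
        linarith
      have step2 : (∑ k : Fin n, (x k - y k.succ k)) =
          (∑ i, ∑ k : Fin n, y i k) - ∑ k : Fin n, y k.succ k := by
        rw [Finset.sum_sub_distrib]
        congr 1
        rw [Finset.sum_comm]
        exact Finset.sum_congr rfl fun k _ => (hcoord k).symm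
      have step3 : (∑ i, ∑ k : Fin n, y i k) ≤ (∑ j, y 0 j) + ∑ k : Fin n, (d k.succ : ℝ) := by
        rw [Fin.sum_univ_succ]
        exact add_le_add le_rfl (Finset.sum_le_sum fun (k : Fin n) _ => hys k.succ)
      have : (∑ k : Fin n, ((d k.succ : ℝ) - y k.succ k)) =
          (∑ k : Fin n, (d k.succ : ℝ)) - ∑ k : Fin n, y k.succ k :=
        Finset.sum_sub_distrib _ _
      linarith
    · -- C ≤ value
      have : C ≤ ∑ k : Fin n, ((d k.succ : ℝ) - y k.succ k) := by
        apply Finset.sum_le_sum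
        intro k _
        have := hyle k
        simp only [hcap_def]
        linarith
      linarith
  -- now the upper bound: max R C is attained
  have mem : max R C ∈ {t | ∃ y : Fin (n+1) → Fin n → ℝ,
      (∀ i, y i ∈ simplexLe ((d i : ℝ))) ∧ (∑ i, y i) = x ∧
      (∑ i, phiFn d i (y i)) = t} := by
    rcases eq_or_lt_of_le hR0 with hR | hR
    · -- R = 0 : r = 0 pointwise
      have hr : ∀ j, r j = 0 := by
        intro j
        have := Finset.sum_eq_zero_iff_of_nonneg (fun j _ => hr0 j) |>.1 hR.symm
        exact this j (Finset.mem_univ j)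
      refine ⟨Fin.cases 0 (fun k j => if j = k then a k else 0), ?_, ?_, ?_⟩
      · intro i
        refine Fin.cases ?_ ?_ i
        · constructor
          · intro j; simp
          · simp
        · intro k
          constructor
          · intro j
            simp only [Fin.cases_succ]
            split <;> [exact ha0 k; exact le_rfl]
          · simp only [Fin.cases_succ]
            have hsit : (∑ j : Fin n, if j = k then a k else 0) = a k := by simp
            rw [hsit]
            exact ha_le_d k
      · funext j
        rw [Finset.sum_apply]
        rw [Fin.sum_univ_succ]
        simp only [Fin.cases_zero, Fin.cases_succ, Pi.zero_apply, zero_add]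
        have h1 : (∑ k : Fin n, if j = k then a k else 0) = a j := by simp
        rw [h1]
        have h2 := hr j
        have h3 : r j = x j - a j := rfl
        rw [h3] at h2
        linarith
      · rw [max_eq_right (show R ≤ C by rw [← hR]; exact hC0)]
        rw [Fin.sum_univ_succ, phi0]
        simp only [Fin.cases_zero, Fin.cases_succ, Pi.zero_apply, Finset.sum_const_zero,
          zero_add]
        apply Finset.sum_congr rfl
        intro k _
        rw [phis]
        simp only [if_pos rfl]
        rfl
    · -- R > 0
      set θ : ℝ := min R C / C with hθ_def
      set w0 : ℝ := max 0 (R - C) with hw0_def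
      have hθ0 : 0 ≤ θ := by positivity
      have hθ1 : θ ≤ 1 := by
        rcases eq_or_lt_of_le hC0 with h | h
        · simp [hθ_def, ← h]
        · rw [hθ_def, div_le_one h]; exact min_le_right _ _
      have hθC : θ * C = min R C := by
        rcases eq_or_lt_of_le hC0 with h | h
        · rw [← h, mul_zero, min_eq_right hR0]
        · rw [hθ_def, div_mul_cancel₀]; exact h.ne'
      have hw0C : w0 + θ * C = R := by
        rw [hθC, hw0_def]
        rcases le_total R C with h | h
        · rw [max_eq_left (by linarith), min_eq_left h]; ring
        · rw [max_eq_right (by linarith), min_eq_right h]; ring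
      have hw00 : 0 ≤ w0 := le_max_left _ _
      have hRdiv : (∑ j, r j / R) = 1 := by
        rw [← Finset.sum_div, ← hR_def, div_self hR.ne']
      refine ⟨Fin.cases (fun j => w0 * (r j / R))
        (fun k j => θ * cap k * (r j / R) + if j = k then a k else 0), ?_, ?_, ?_⟩
      · intro i
        refine Fin.cases ?_ ?_ i
        · constructor
          · intro j
            simp only [Fin.cases_zero]
            exact mul_nonneg hw00 (div_nonneg (hr0 j) hR0)
          · simp only [Fin.cases_zero]
            rw [← Finset.mul_sum, hRdiv, mul_one]
            exact max_le hd0.le hRCd0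
        · intro k
          constructor
          · intro j
            simp only [Fin.cases_succ]
            have h1 : 0 ≤ θ * cap k * (r j / R) := by
              have := hcap0 k; have := hr0 j; positivity
            have h2 : (0:ℝ) ≤ if j = k then a k else 0 := by
              split <;> [exact ha0 k; exact le_refl 0]
            linarith
          · simp only [Fin.cases_succ]
            have hsit : (∑ j : Fin n, if j = k then a k else 0) = a k := by simp
            rw [Finset.sum_add_distrib, ← Finset.mul_sum, hRdiv, mul_one, hsit]
            have h1 : θ * cap k ≤ cap k := by nlinarith [hcap0 k]
            have h2 : cap k = (d k.succ : ℝ) - a k := rfl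
            linarith
      · funext j
        rw [Finset.sum_apply, Fin.sum_univ_succ]
        simp only [Fin.cases_zero, Fin.cases_succ]
        have hsit : (∑ k : Fin n, if j = k then a k else 0) = a j := by simp
        rw [Finset.sum_add_distrib, hsit]
        have : (∑ k : Fin n, θ * cap k * (r j / R)) = θ * C * (r j / R) := by
          rw [hC_def, Finset.mul_sum, Finset.sum_mul]
        rw [this]
        have h4 : R * (r j / R) = r j := by field_simp
        have h5 : r j = x j - a j := rfl
        calc w0 * (r j / R) + (θ * C * (r j / R) + a j)
            = (w0 + θ * C) * (r j / R) + a j := by ring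
          _ = R * (r j / R) + a j := by rw [hw0C]
          _ = x j := by rw [h4, h5]; ring
      · rw [Fin.sum_univ_succ, phi0]
        simp only [Fin.cases_zero, Fin.cases_succ]
        rw [← Finset.mul_sum, hRdiv, mul_one]
        have hterm : ∀ k : Fin n,
            phiFn d k.succ (fun j => θ * cap k * (r j / R) + if j = k then a k else 0)
            = cap k := by
          intro k
          rw [phis]
          simp only [if_pos rfl]
          have hcr : cap k * r k = 0 := by
            rcases min_cases ((d k.succ : ℝ)) (x k) with ⟨h, h'⟩ | ⟨h, h'⟩
            · have : cap k = 0 := by simp [hcap_def, ha_def, h]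
              rw [this, zero_mul]
            · have : r k = 0 := by simp [hr_def, ha_def, h]
              rw [this, mul_zero]
          have hz : θ * cap k * (r k / R) = θ * (cap k * r k) / R := by ring
          rw [hz, hcr, mul_zero, zero_div, zero_add]
          rfl
        rw [Finset.sum_congr rfl (fun k _ => hterm k), ← hC_def]
        rw [hw0_def]
        rcases le_total R C with h | h
        · rw [max_eq_left (by linarith), max_eq_right h]; ring
        · rw [max_eq_right (by linarith), max_eq_left h]; ring
  rw [infConv]
  exact le_antisymm (csInf_le ⟨max R C, lower⟩ mem) (le_csInf ⟨_, mem⟩ lower)
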